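/- Let {ρ̃_i}_{i=1}^M be positive operators with Σ_i ρ̃_i = I_N and (M/N²) Σ_i ρ̃_i ⊗ ρ̃_i = (N² I + N·SWAP)/(N⁴+N²). Then every N×N density matrix ρ can be reconstructed as ρ = ((N²+1)M/N) Σ_i p_i ρ̃_i − N·I_N, where p_i = Tr(ρ̃_i ρ). -/

import Mathlib

open Matrix ComplexOrder Kronecker

/-- The SWAP operator on ℂ^N ⊗ ℂ^N. -/
noncomputable def swapOp (N : ℕ) : Matrix (Fin N × Fin N) (Fin N × Fin N) ℂ :=
  fun a b => if a.1 = b.2 ∧ a.2 = b.1 then 1 else 0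

/-- State reconstruction from a rescaled mixed-state 2-design forming a POVM. -/
theorem stmt9 {N M : ℕ} (hN : 0 < N) (hM : 0 < M)
    (E : Fin M → Matrix (Fin N) (Fin N) ℂ)
    (hpsd : ∀ i, (E i).PosSemidef)
    (hsum : ∑ i, E i = (1 : Matrix (Fin N) (Fin N) ℂ))
    (hdesign : ((M : ℂ) / (N : ℂ) ^ 2) • ∑ i, (E i) ⊗ₖ (E i) =
      ((N ^ 4 + N ^ 2 : ℂ))⁻¹ •
        ((N ^ 2 : ℂ) • (1 : Matrix (Fin N × Fin N) (Fin N × Fin N) ℂ) + (N : ℂ) • swapOp N))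
    (ρ : Matrix (Fin N) (Fin N) ℂ) (hρ : ρ.PosSemidef) (hρtr : ρ.trace = 1) :
    ρ = ((((N : ℂ) ^ 2 + 1) * (M : ℂ)) / (N : ℂ)) • (∑ i, ((E i * ρ).trace) • E i)
        - (N : ℂ) • (1 : Matrix (Fin N) (Fin N) ℂ) := by
  have hN0 : (N:ℂ) ≠ 0 := Nat.cast_ne_zero.mpr hN.ne'
  have hM0 : (M:ℂ) ≠ 0 := Nat.cast_ne_zero.mpr hM.ne'
  have hρtr' : ∑ b, ρ b b = 1 := hρtr
  ext a c
  have key : ((M : ℂ) / (N : ℂ) ^ 2) * (∑ i, (E i * ρ).trace * E i a c) =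
      ((N ^ 4 + N ^ 2 : ℂ))⁻¹ * ((N:ℂ)^2 * (if a = c then 1 else 0) + (N:ℂ) * ρ a c) := by
    calc ((M : ℂ) / (N : ℂ) ^ 2) * (∑ i, (E i * ρ).trace * E i a c)
        = ∑ b, ∑ d, ((((M : ℂ) / (N : ℂ) ^ 2) • ∑ i, (E i) ⊗ₖ (E i)) (a,b) (c,d)) * ρ d b := by
          simp only [Matrix.smul_apply, Matrix.sum_apply, kroneckerMap_apply, smul_eq_mul,
            Matrix.trace, Matrix.diag, Matrix.mul_apply, Finset.sum_mul, Finset.mul_sum]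
          rw [Finset.sum_comm]
          apply Finset.sum_congr rfl; intro b _
          rw [Finset.sum_comm]
          apply Finset.sum_congr rfl; intro d _
          apply Finset.sum_congr rfl; intro i _
          ring
      _ = ∑ b, ∑ d, ((((N ^ 4 + N ^ 2 : ℂ))⁻¹ •
            ((N ^ 2 : ℂ) • (1 : Matrix (Fin N × Fin N) (Fin N × Fin N) ℂ) + (N : ℂ) • swapOp N)) (a,b) (c,d)) * ρ d b := by
          rw [hdesign]
      _ = ((N ^ 4 + N ^ 2 : ℂ))⁻¹ * ((N:ℂ)^2 * (if a = c then 1 else 0) + (N:ℂ) * ρ a c) := by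
          simp only [Matrix.smul_apply, Matrix.add_apply, Matrix.one_apply, swapOp,
            smul_eq_mul, Prod.mk.injEq]
          simp [add_mul, mul_assoc, Finset.sum_add_distrib, Finset.mul_sum, ite_and,
            Finset.sum_ite_eq, Finset.sum_ite_eq', hρtr', mul_comm]
          by_cases hac : a = c <;>
            simp [hac, mul_ite, mul_add, Finset.sum_add_distrib, Finset.sum_ite_eq,
              Finset.sum_ite_eq', ← Finset.sum_mul, hρtr']
  have hD : ((N:ℂ)^4 + (N:ℂ)^2) ≠ 0 := by
    have h : ((N:ℂ)^4 + (N:ℂ)^2) = ((N^4 + N^2 : ℕ) : ℂ) := by push_cast; ring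
    rw [h]
    exact Nat.cast_ne_zero.mpr (by positivity)
  have hgoal : ρ a c = ((((N : ℂ) ^ 2 + 1) * (M : ℂ)) / (N : ℂ)) * (∑ i, ((E i * ρ).trace) * E i a c)
      - (N : ℂ) * (if a = c then 1 else 0) := by
    have h2 : (∑ i, ((E i * ρ).trace) * E i a c) =
        ((N:ℂ)^2 / (M:ℂ)) * (((N ^ 4 + N ^ 2 : ℂ))⁻¹ * ((N:ℂ)^2 * (if a = c then 1 else 0) + (N:ℂ) * ρ a c)) := by
      rw [← key]; field_simp
    rw [h2]
    by_cases hac : a = c <;> field_simp [hac] <;> ring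
  simpa [Matrix.sub_apply, Matrix.smul_apply, Matrix.sum_apply, Matrix.one_apply] using hgoal
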